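/- arXiv:2104.03193 — 3 statements merged into one kernel-verified Lean document; each statement's English description precedes it below -/
import Mathlib

section
/- The set of n×n symmetric positive definite matrices equipped with the operation P ⊙ Q = exp(log P + log Q) forms an Abelian group, with identity the n×n identity matrix and inverse of P given by the usual matrix inverse P⁻¹. -/
open Matrix

/-- The set of n×n symmetric positive definite matrices with P ⊙ Q = exp(log P + log Q)
forms an Abelian group, with identity the identity matrix and inverse the matrix inverse.
Here `mlog` is the principal matrix logarithm, characterized as the inverse of the
matrix exponential between symmetric matrices and symmetric positive definite matrices. -/
theorem spd_logEuclidean_abelian_group (n : ℕ)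
    (mlog : Matrix (Fin n) (Fin n) ℝ → Matrix (Fin n) (Fin n) ℝ)
    (hexp_log : ∀ P : Matrix (Fin n) (Fin n) ℝ, P.PosDef → NormedSpace.exp (mlog P) = P)
    (hlog_exp : ∀ S : Matrix (Fin n) (Fin n) ℝ, S.IsSymm → mlog (NormedSpace.exp S) = S)
    (hlog_symm : ∀ P : Matrix (Fin n) (Fin n) ℝ, P.PosDef → (mlog P).IsSymm)
    (hexp_pd : ∀ S : Matrix (Fin n) (Fin n) ℝ, S.IsSymm → (NormedSpace.exp S).PosDef) :
    ∀ op : Matrix (Fin n) (Fin n) ℝ → Matrix (Fin n) (Fin n) ℝ → Matrix (Fin n) (Fin n) ℝ,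
      (op = fun P Q => NormedSpace.exp (mlog P + mlog Q)) →
      (∀ P Q, P.PosDef → Q.PosDef → (op P Q).PosDef) ∧
      (∀ P Q R, P.PosDef → Q.PosDef → R.PosDef → op (op P Q) R = op P (op Q R)) ∧
      (∀ P Q, P.PosDef → Q.PosDef → op P Q = op Q P) ∧
      (∀ P, P.PosDef → op P 1 = P ∧ op 1 P = P) ∧
      (∀ P, P.PosDef → op P P⁻¹ = 1 ∧ op P⁻¹ P = 1) := by
  intro op hop
  subst hop
  have hlog_one : mlog 1 = 0 := by
    have := hlog_exp 0 (Matrix.isSymm_zero)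
    rwa [NormedSpace.exp_zero] at this
  have hlog_inv : ∀ P : Matrix (Fin n) (Fin n) ℝ, P.PosDef → mlog P⁻¹ = -(mlog P) := by
    intro P hP
    have h1 : P⁻¹ = NormedSpace.exp (-(mlog P)) := by
      rw [Matrix.exp_neg, hexp_log P hP]
    rw [h1, hlog_exp _ ((hlog_symm P hP).neg)]
  refine ⟨?_, ?_, ?_, ?_, ?_⟩
  · intro P Q hP hQ
    exact hexp_pd _ ((hlog_symm P hP).add (hlog_symm Q hQ))
  · intro P Q R hP hQ hR
    simp only
    rw [hlog_exp _ ((hlog_symm P hP).add (hlog_symm Q hQ)),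
      hlog_exp _ ((hlog_symm Q hQ).add (hlog_symm R hR)), add_assoc]
  · intro P Q hP hQ
    simp only [add_comm]
  · intro P hP
    constructor <;> simp [hlog_one, hexp_log P hP]
  · intro P hP
    have hinv : (P⁻¹).PosDef := hP.inv
    constructor <;> simp [hlog_inv P hP, hexp_log P hP, NormedSpace.exp_zero]
end

section
/- The operations ⊙ and ∗ make SP(n) a real vector space: with P ⊙ Q = exp(log P + log Q) as addition and λ ∗ P = exp(λ log P) as scalar multiplication, all vector space axioms hold. -/
open Matrix

/-- With P ⊙ Q = exp(log P + log Q) as addition and λ ∗ P = exp(λ log P) as scalar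
multiplication, the symmetric positive definite matrices satisfy all the real vector
space axioms (with the identity matrix as zero vector and matrix inverse as negation). -/
theorem spd_logEuclidean_vector_space (n : ℕ)
    (mlog : Matrix (Fin n) (Fin n) ℝ → Matrix (Fin n) (Fin n) ℝ)
    (hexp_log : ∀ P : Matrix (Fin n) (Fin n) ℝ, P.PosDef → NormedSpace.exp (mlog P) = P)
    (hlog_exp : ∀ S : Matrix (Fin n) (Fin n) ℝ, S.IsSymm → mlog (NormedSpace.exp S) = S)
    (hlog_symm : ∀ P : Matrix (Fin n) (Fin n) ℝ, P.PosDef → (mlog P).IsSymm)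
    (hexp_pd : ∀ S : Matrix (Fin n) (Fin n) ℝ, S.IsSymm → (NormedSpace.exp S).PosDef) :
    ∀ (op : Matrix (Fin n) (Fin n) ℝ → Matrix (Fin n) (Fin n) ℝ → Matrix (Fin n) (Fin n) ℝ)
      (sm : ℝ → Matrix (Fin n) (Fin n) ℝ → Matrix (Fin n) (Fin n) ℝ),
      (op = fun P Q => NormedSpace.exp (mlog P + mlog Q)) →
      (sm = fun lam P => NormedSpace.exp (lam • mlog P)) →
      -- closure
      (∀ P Q, P.PosDef → Q.PosDef → (op P Q).PosDef) ∧
      (∀ (lam : ℝ) P, P.PosDef → (sm lam P).PosDef) ∧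
      -- abelian group axioms for ⊙
      (∀ P Q R, P.PosDef → Q.PosDef → R.PosDef → op (op P Q) R = op P (op Q R)) ∧
      (∀ P Q, P.PosDef → Q.PosDef → op P Q = op Q P) ∧
      (∀ P, P.PosDef → op P 1 = P) ∧
      (∀ P, P.PosDef → op P P⁻¹ = 1) ∧
      -- scalar multiplication axioms
      (∀ P, P.PosDef → sm 1 P = P) ∧
      (∀ (a b : ℝ) P, P.PosDef → sm (a * b) P = sm a (sm b P)) ∧
      (∀ (a : ℝ) P Q, P.PosDef → Q.PosDef → sm a (op P Q) = op (sm a P) (sm a Q)) ∧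
      (∀ (a b : ℝ) P, P.PosDef → sm (a + b) P = op (sm a P) (sm b P)) ∧
      (∀ P, P.PosDef → sm 0 P = 1) := by
  intro op sm hop hsm
  subst hop hsm
  have hlog1 : mlog 1 = 0 := by
    have := hlog_exp 0 Matrix.isSymm_zero
    simpa [NormedSpace.exp_zero] using this
  have hloginv : ∀ P : Matrix (Fin n) (Fin n) ℝ, P.PosDef → mlog P⁻¹ = -(mlog P) := by
    intro P hP
    have h1 : P⁻¹ = NormedSpace.exp (-(mlog P)) := by
      rw [Matrix.exp_neg, hexp_log P hP]
    rw [h1, hlog_exp _ ((hlog_symm P hP).neg)]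
  refine ⟨?_, ?_, ?_, ?_, ?_, ?_, ?_, ?_, ?_, ?_, ?_⟩
  · intro P Q hP hQ
    exact hexp_pd _ ((hlog_symm P hP).add (hlog_symm Q hQ))
  · intro lam P hP
    exact hexp_pd _ ((hlog_symm P hP).smul lam)
  · intro P Q R hP hQ hR
    simp only
    rw [hlog_exp _ ((hlog_symm P hP).add (hlog_symm Q hQ)),
        hlog_exp _ ((hlog_symm Q hQ).add (hlog_symm R hR)), add_assoc]
  · intro P Q hP hQ
    simp only [add_comm]
  · intro P hP
    simp [hlog1, hexp_log P hP]
  · intro P hP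
    simp [hloginv P hP, NormedSpace.exp_zero]
  · intro P hP
    simp [hexp_log P hP]
  · intro a b P hP
    simp only
    rw [hlog_exp _ ((hlog_symm P hP).smul b), smul_smul]
  · intro a P Q hP hQ
    simp only
    rw [hlog_exp _ ((hlog_symm P hP).add (hlog_symm Q hQ)),
        hlog_exp _ ((hlog_symm P hP).smul a), hlog_exp _ ((hlog_symm Q hQ).smul a), smul_add]
  · intro a b P hP
    simp only
    rw [hlog_exp _ ((hlog_symm P hP).smul a), hlog_exp _ ((hlog_symm P hP).smul b), add_smul]
  · intro P hP
    simp [NormedSpace.exp_zero]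
end

section
/- For symmetric positive definite matrices P and Q and t ∈ [0,1], the determinant of the point exp((1−t) log P + t log Q) on the Log-Euclidean geodesic equals det(P)^{1−t} · det(Q)^t; in particular there is no swelling effect: det of any point on the geodesic is at most max(det P, det Q) raised to appropriate interpolation, i.e. log det interpolates linearly. -/
open Matrix

lemma det_exp_isSymm {n : ℕ} (S : Matrix (Fin n) (Fin n) ℝ) (hS : S.IsSymm) :
    (NormedSpace.exp S).det = Real.exp S.trace := by
  have hH : S.IsHermitian := by rwa [Matrix.IsHermitian, conjTranspose_eq_transpose_of_trivial]
  set U : Matrix (Fin n) (Fin n) ℝ := (hH.eigenvectorUnitary : Matrix (Fin n) (Fin n) ℝ) with hUdef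
  have hcj := hH.spectral_theorem
  have hU : IsUnit U := ⟨Unitary.toUnits hH.eigenvectorUnitary, rfl⟩
  have hinv : U⁻¹ = star U := Matrix.inv_eq_left_inv (Matrix.mem_unitaryGroup_iff'.mp hH.eigenvectorUnitary.2)
  rw [hcj, Unitary.conjStarAlgAut_apply, ← hinv, Matrix.exp_conj _ _ hU, Matrix.exp_diagonal]
  rw [Matrix.det_mul_right_comm, hinv, Matrix.mem_unitaryGroup_iff.mp hH.eigenvectorUnitary.2,
    one_mul, Matrix.det_diagonal, Matrix.trace_mul_cycle,
    Matrix.mem_unitaryGroup_iff'.mp hH.eigenvectorUnitary.2, one_mul, Matrix.trace_diagonal]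
  rw [Real.exp_sum]
  exact Finset.prod_congr rfl fun i _ => by simp [← Real.exp_eq_exp_ℝ]

/-- Along the Log-Euclidean geodesic γ(t) = exp((1−t) log P + t log Q) between symmetric
positive definite matrices, det γ(t) = (det P)^{1−t} (det Q)^t; in particular log det
interpolates linearly (no swelling effect). -/
theorem logEuclidean_geodesic_det (n : ℕ)
    (mlog : Matrix (Fin n) (Fin n) ℝ → Matrix (Fin n) (Fin n) ℝ)
    (hexp_log : ∀ P : Matrix (Fin n) (Fin n) ℝ, P.PosDef → NormedSpace.exp (mlog P) = P)
    (hlog_exp : ∀ S : Matrix (Fin n) (Fin n) ℝ, S.IsSymm → mlog (NormedSpace.exp S) = S)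
    (hlog_symm : ∀ P : Matrix (Fin n) (Fin n) ℝ, P.PosDef → (mlog P).IsSymm)
    (P Q : Matrix (Fin n) (Fin n) ℝ) (hP : P.PosDef) (hQ : Q.PosDef)
    (t : ℝ) (ht : t ∈ Set.Icc (0 : ℝ) 1) :
    (NormedSpace.exp ((1 - t) • mlog P + t • mlog Q)).det
      = P.det ^ (1 - t) * Q.det ^ t ∧
    Real.log (NormedSpace.exp ((1 - t) • mlog P + t • mlog Q)).det
      = (1 - t) * Real.log P.det + t * Real.log Q.det := by
  have hSP := hlog_symm P hP
  have hSQ := hlog_symm Q hQ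
  have hA : ((1 - t) • mlog P + t • mlog Q).IsSymm := by
    rw [Matrix.IsSymm] at hSP hSQ ⊢
    rw [transpose_add, transpose_smul, transpose_smul, hSP, hSQ]
  have hdP : P.det = Real.exp (mlog P).trace := by
    rw [← hexp_log P hP, det_exp_isSymm _ hSP, hexp_log P hP]
  have hdQ : Q.det = Real.exp (mlog Q).trace := by
    rw [← hexp_log Q hQ, det_exp_isSymm _ hSQ, hexp_log Q hQ]
  have htr : ((1 - t) • mlog P + t • mlog Q).trace
      = (1 - t) * (mlog P).trace + t * (mlog Q).trace := by
    rw [Matrix.trace_add, Matrix.trace_smul, Matrix.trace_smul]; simp [smul_eq_mul]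
  have hdet : (NormedSpace.exp ((1 - t) • mlog P + t • mlog Q)).det
      = P.det ^ (1 - t) * Q.det ^ t := by
    rw [det_exp_isSymm _ hA, htr, Real.exp_add, hdP, hdQ, ← Real.exp_mul, ← Real.exp_mul,
      mul_comm ((mlog P).trace), mul_comm ((mlog Q).trace)]
  refine ⟨hdet, ?_⟩
  rw [det_exp_isSymm _ hA, Real.log_exp, htr, hdP, hdQ, Real.log_exp, Real.log_exp]
end
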